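/- Let w : Π' → 𝕂 be a partial integral of the completely solvable total differential system dx = X(t,x)dt, i.e. X_j w = Φ_j with Φ_j vanishing on {w = 0}, where Φ_j are continuous. If x : T → 𝕂ⁿ is a solution of the system with (t, x(t)) ∈ Π' for all t ∈ T and w(t₀, x(t₀)) = 0 for some t₀, then w(t, x(t)) = 0 for all t ∈ T (assuming T connected and a Lipschitz-type condition for Φ_j along {w=0} guaranteeing uniqueness of the zero solution of the derived ODE). -/

import Mathlib

section
variable {m n : ℕ}

/-- Partial derivative in the `t_j` direction, for a function on
`(Fin m → ℝ) × (Fin n → ℝ)`. -/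
noncomputable def pdt (j : Fin m) (f : (Fin m → ℝ) × (Fin n → ℝ) → ℝ)
    (p : (Fin m → ℝ) × (Fin n → ℝ)) : ℝ :=
  fderiv ℝ f p (Pi.single j 1, 0)

/-- Partial derivative in the `x_i` direction. -/
noncomputable def pdx (i : Fin n) (f : (Fin m → ℝ) × (Fin n → ℝ) → ℝ)
    (p : (Fin m → ℝ) × (Fin n → ℝ)) : ℝ :=
  fderiv ℝ f p (0, Pi.single i 1)

/-- The zero set of a partial integral `w` of a completely solvable total differential
system is invariant: if `X_j w = Φ_j` on `Π'` with `Φ_j` vanishing on `{w = 0}` and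
satisfying a Lipschitz-type bound `|Φ_j| ≤ K·|w|` along a solution `x(t)` of the
system lying in `Π'`, and `w(t₀, x(t₀)) = 0` at some `t₀` of the connected
domain `T`, then `w(t, x(t)) = 0` for all `t ∈ T`. -/
theorem stmt19 (Xm : Fin n → Fin m → ((Fin m → ℝ) × (Fin n → ℝ) → ℝ))
    (w : (Fin m → ℝ) × (Fin n → ℝ) → ℝ) (hw : Differentiable ℝ w)
    (Φ : Fin m → ((Fin m → ℝ) × (Fin n → ℝ) → ℝ)) (hΦ : ∀ j, Continuous (Φ j))
    (Pi' : Set ((Fin m → ℝ) × (Fin n → ℝ)))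
    (hpi : ∀ j : Fin m, ∀ p ∈ Pi',
      pdt j w p + ∑ i : Fin n, Xm i j p * pdx i w p = Φ j p)
    (hΦ0 : ∀ j : Fin m, ∀ p ∈ Pi', w p = 0 → Φ j p = 0)
    (T : Set (Fin m → ℝ)) (hT : IsOpen T) (hTconn : IsPreconnected T)
    (x : (Fin m → ℝ) → (Fin n → ℝ)) (hx : Differentiable ℝ x)
    (hmem : ∀ t ∈ T, (t, x t) ∈ Pi')
    (hsol : ∀ t ∈ T, ∀ j : Fin m,
      fderiv ℝ x t (Pi.single j 1) = fun i => Xm i j (t, x t))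
    (K : ℝ)
    (hlip : ∀ j : Fin m, ∀ t ∈ T, |Φ j (t, x t)| ≤ K * |w (t, x t)|)
    (t₀ : Fin m → ℝ) (ht₀ : t₀ ∈ T) (hw0 : w (t₀, x t₀) = 0) :
    ∀ t ∈ T, w (t, x t) = 0 := by
  classical
  set v : (Fin m → ℝ) → ℝ := fun t => w (t, x t) with hvdef
  have hfd : ∀ t, HasFDerivAt (fun t => (t, x t))
      ((ContinuousLinearMap.id ℝ (Fin m → ℝ)).prod (fderiv ℝ x t)) t :=
    fun t => HasFDerivAt.prodMk (hasFDerivAt_id t) (hx t).hasFDerivAt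
  have hvfd : ∀ t, HasFDerivAt v ((fderiv ℝ w (t, x t)).comp
      ((ContinuousLinearMap.id ℝ (Fin m → ℝ)).prod (fderiv ℝ x t))) t :=
    fun t => ((hw (t, x t)).hasFDerivAt.comp t (hfd t))
  have hvdiff : Differentiable ℝ v := fun t => (hvfd t).differentiableAt
  -- value of the derivative of v along a direction d
  have hval : ∀ t ∈ T, ∀ d : Fin m → ℝ,
      fderiv ℝ v t d = ∑ j, d j * Φ j (t, x t) := by
    intro t ht d
    rw [(hvfd t).fderiv]
    simp only [ContinuousLinearMap.comp_apply, ContinuousLinearMap.prod_apply,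
      ContinuousLinearMap.id_apply]
    have hd : (∑ j, d j • (Pi.single j 1 : Fin m → ℝ)) = d := by
      ext k
      simp [Pi.single_apply, Finset.sum_ite_eq', mul_comm]
    have hx' : fderiv ℝ x t d = ∑ j, d j • (fun i => Xm i j (t, x t)) := by
      conv_lhs => rw [← hd]
      rw [map_sum]
      refine Finset.sum_congr rfl fun j _ => ?_
      rw [map_smul, hsol t ht j]
    have e1 : ((d, fderiv ℝ x t d) : (Fin m → ℝ) × (Fin n → ℝ))
        = ∑ j, d j • ((Pi.single j 1 : Fin m → ℝ),
            (fun i => Xm i j (t, x t) : Fin n → ℝ)) := by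
      refine Prod.ext ?_ ?_
      · rw [Prod.fst_sum]
        simpa using hd.symm
      · rw [Prod.snd_sum]
        simpa using hx'
    rw [e1, map_sum]
    refine Finset.sum_congr rfl fun j _ => ?_
    rw [map_smul]
    have hsplit : ((Pi.single j 1 : Fin m → ℝ),
        (fun i => Xm i j (t, x t) : Fin n → ℝ))
        = ((Pi.single j 1 : Fin m → ℝ), (0 : Fin n → ℝ))
          + ((0 : Fin m → ℝ), (fun i => Xm i j (t, x t) : Fin n → ℝ)) := by
      simp
    have hXj : (fun i => Xm i j (t, x t) : Fin n → ℝ)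
        = ∑ i, Xm i j (t, x t) • (Pi.single i 1 : Fin n → ℝ) := by
      ext k
      simp [Pi.single_apply, Finset.sum_ite_eq', mul_comm]
    have h2 : fderiv ℝ w (t, x t)
        (((0 : Fin m → ℝ), (fun i => Xm i j (t, x t) : Fin n → ℝ)))
        = ∑ i, Xm i j (t, x t) * pdx i w (t, x t) := by
      have : (((0 : Fin m → ℝ), (fun i => Xm i j (t, x t) : Fin n → ℝ)))
          = ∑ i, Xm i j (t, x t) • (((0 : Fin m → ℝ),
              (Pi.single i 1 : Fin n → ℝ))) := by
        refine Prod.ext ?_ ?_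
        · rw [Prod.fst_sum]; simp
        · rw [Prod.snd_sum]; simpa using hXj
      rw [this, map_sum]
      refine Finset.sum_congr rfl fun i _ => ?_
      rw [map_smul]
      rfl
    rw [hsplit, map_add, h2]
    have := hpi j (t, x t) (hmem t ht)
    unfold pdt at this
    rw [this, smul_eq_mul]
  -- main lemma: zero propagates in balls
  have hzero_ball : ∀ t₁ ∈ T, v t₁ = 0 → ∀ r : ℝ, Metric.ball t₁ r ⊆ T →
      ∀ t₂ ∈ Metric.ball t₁ r, v t₂ = 0 := by
    intro t₁ ht₁ hv1 r hball t₂ ht₂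
    have hr : 0 < r := Metric.pos_of_mem_ball ht₂
    have ht₁ball : t₁ ∈ Metric.ball t₁ r := Metric.mem_ball_self hr
    set d : Fin m → ℝ := t₂ - t₁ with hddef
    set γ : ℝ → (Fin m → ℝ) := fun s => t₁ + s • d with hγdef
    have hγmem : ∀ s ∈ Set.Icc (0:ℝ) 1, γ s ∈ Metric.ball t₁ r := by
      intro s hs
      exact (convex_ball t₁ r).add_smul_sub_mem ht₁ball ht₂ hs
    have hγT : ∀ s ∈ Set.Icc (0:ℝ) 1, γ s ∈ T := fun s hs => hball (hγmem s hs)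
    have hγderiv : ∀ s : ℝ, HasDerivAt γ d s := by
      intro s
      have h1 : HasDerivAt (fun s : ℝ => s • d) d s := by
        simpa using (hasDerivAt_id s).smul_const d
      exact h1.const_add t₁
    set g : ℝ → ℝ := fun s => v (γ s) with hgdef
    have hgderiv : ∀ s ∈ Set.Icc (0:ℝ) 1,
        HasDerivAt g (∑ j, d j * Φ j (γ s, x (γ s))) s := by
      intro s hs
      have h1 := (hvfd (γ s)).comp_hasDerivAt s (hγderiv s)
      have h2 : ((fderiv ℝ w (γ s, x (γ s))).comp
          ((ContinuousLinearMap.id ℝ (Fin m → ℝ)).prod (fderiv ℝ x (γ s)))) d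
          = ∑ j, d j * Φ j (γ s, x (γ s)) := by
        rw [← (hvfd (γ s)).fderiv]
        exact hval (γ s) (hγT s hs) d
      rw [h2] at h1
      exact h1
    set C : ℝ := (∑ j, |d j|) * |K| with hCdef
    have hbound : ∀ s ∈ Set.Ico (0:ℝ) 1,
        ‖∑ j, d j * Φ j (γ s, x (γ s))‖ ≤ C * ‖g s‖ + 0 := by
      intro s hs
      have hsT : γ s ∈ T := hγT s ⟨hs.1, hs.2.le⟩
      rw [add_zero]
      calc ‖∑ j, d j * Φ j (γ s, x (γ s))‖
          ≤ ∑ j, ‖d j * Φ j (γ s, x (γ s))‖ := norm_sum_le _ _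
        _ ≤ ∑ j, |d j| * (|K| * |v (γ s)|) := by
            refine Finset.sum_le_sum fun j _ => ?_
            rw [norm_mul]
            refine mul_le_mul_of_nonneg_left ?_ (abs_nonneg _)
            calc ‖Φ j (γ s, x (γ s))‖ ≤ K * |w (γ s, x (γ s))| :=
                  hlip j (γ s) hsT
              _ ≤ |K| * |v (γ s)| := by
                  refine mul_le_mul_of_nonneg_right (le_abs_self K) (abs_nonneg _)
        _ = C * ‖g s‖ := by
            rw [← Finset.sum_mul]
            simp [hCdef, mul_assoc, Real.norm_eq_abs, hgdef]
    have hγcont : Continuous γ := continuous_const.add (continuous_id.smul continuous_const)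
    have hgcont : ContinuousOn g (Set.Icc (0:ℝ) 1) :=
      (hvdiff.continuous.comp hγcont).continuousOn
    have hg0 : ‖g 0‖ ≤ 0 := by
      have : γ 0 = t₁ := by simp [hγdef]
      simp [hgdef, this, hv1]
    have := norm_le_gronwallBound_of_norm_deriv_right_le hgcont
      (fun s hs => (hgderiv s ⟨hs.1, hs.2.le⟩).hasDerivWithinAt) hg0 hbound
    have hg1 : ‖g 1‖ ≤ 0 := by
      have h := this 1 ⟨zero_le_one, le_refl 1⟩
      rwa [gronwallBound_ε0, zero_mul] at h
    have hγ1 : γ 1 = t₂ := by simp [hγdef, hddef]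
    have hg1' : g 1 = 0 := norm_le_zero_iff.mp hg1
    rw [hgdef] at hg1'
    simpa [hγ1] using hg1'
  -- connectedness argument
  set S : Set (Fin m → ℝ) := {t | t ∈ T ∧ v t = 0} with hSdef
  have hSopen : IsOpen S := by
    rw [Metric.isOpen_iff]
    intro t₁ ht₁
    obtain ⟨r, hr, hball⟩ := Metric.isOpen_iff.mp hT t₁ ht₁.1
    exact ⟨r, hr, fun t₂ ht₂ => ⟨hball ht₂, hzero_ball t₁ ht₁.1 ht₁.2 r hball t₂ ht₂⟩⟩
  set V : Set (Fin m → ℝ) := {t | v t ≠ 0} with hVdef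
  have hVopen : IsOpen V := isOpen_ne_fun hvdiff.continuous continuous_const
  intro t ht
  by_contra hne
  have hcover : T ⊆ S ∪ V := by
    intro s hs
    by_cases h : v s = 0
    · exact Or.inl ⟨hs, h⟩
    · exact Or.inr h
  obtain ⟨u, hu⟩ := hTconn S V hSopen hVopen hcover
    ⟨t₀, ht₀, ht₀, hw0⟩ ⟨t, ht, hne⟩
  exact hu.2.2 hu.2.1.2


end
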